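/- There is a universal constant c₀ > 0 with the following property. Let L be a positive integer, B = {0,1,…,L−1}³ ⊆ ℤ³, and a > 0. For every f : B → ℝ, writing E(f) = Σ_{μ=1}^{3} Σ_{x : x, x+e_μ ∈ B} (f(x+e_μ) − f(x))² for the Neumann Dirichlet form and m(f) = L⁻³ Σ_{x∈B} f(x) for the mean, one has E(f) + a·L·m(f)² ≥ min(c₀, a) · L⁻² · Σ_{x∈B} f(x)². -/

import Mathlib

/-- The cube `{0,1,…,L−1}³ ⊆ ℤ³`. -/
def cubeBox (L : ℕ) : Finset (Fin 3 → ℤ) :=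
  Finset.image (fun t : Fin 3 → Fin L => fun i => ((t i : ℕ) : ℤ)) Finset.univ

/-- The coordinate unit vector `e_μ` of `ℤ³`. -/
def unitVec (μ : Fin 3) : Fin 3 → ℤ := fun i => if i = μ then 1 else 0

open Finset


lemma pair_sum_identity {ι : Type*} (A : Finset ι) (F : ι → ℝ) :
    ∑ s ∈ A, ∑ t ∈ A, (F s - F t) ^ 2
      = 2 * A.card * (∑ s ∈ A, F s ^ 2) - 2 * (∑ s ∈ A, F s) ^ 2 := by
  have h1 : ∀ s ∈ A, ∑ t ∈ A, (F s - F t) ^ 2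
      = A.card * F s ^ 2 - 2 * F s * (∑ t ∈ A, F t) + ∑ t ∈ A, F t ^ 2 := by
    intro s _
    rw [Finset.sum_congr rfl
      (fun t _ => (by ring : (F s - F t) ^ 2 = F s ^ 2 - 2 * F s * F t + F t ^ 2)),
      Finset.sum_add_distrib, Finset.sum_sub_distrib, Finset.sum_const, ← Finset.mul_sum,
      nsmul_eq_mul]
  rw [Finset.sum_congr rfl h1, Finset.sum_add_distrib, Finset.sum_sub_distrib,
    ← Finset.mul_sum, ← Finset.sum_mul, Finset.sum_const, nsmul_eq_mul]
  have h2 : ∑ x ∈ A, 2 * F x = 2 * ∑ x ∈ A, F x := by rw [Finset.mul_sum]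
  rw [h2]; ring

lemma line_bound (L : ℕ) (h : ℕ → ℝ) {a a' : ℕ} (ha : a < L) (ha' : a' < L) :
    (h a - h a') ^ 2 ≤ L * ∑ k ∈ range (L - 1), (h (k + 1) - h k) ^ 2 := by
  wlog hle : a ≤ a' generalizing a a'
  · have := this ha' ha (le_of_not_ge hle)
    calc (h a - h a') ^ 2 = (h a' - h a) ^ 2 := by ring
      _ ≤ _ := this
  have key : h a' - h a = ∑ k ∈ Ico a a', (h (k + 1) - h k) := by
    rw [Finset.sum_Ico_eq_sub _ hle, Finset.sum_range_sub, Finset.sum_range_sub]; ring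
  calc (h a - h a') ^ 2 = (∑ k ∈ Ico a a', (h (k + 1) - h k)) ^ 2 := by rw [← key]; ring
    _ ≤ (Ico a a').card * ∑ k ∈ Ico a a', (h (k + 1) - h k) ^ 2 := sq_sum_le_card_mul_sum_sq
    _ ≤ L * ∑ k ∈ range (L - 1), (h (k + 1) - h k) ^ 2 := by
        apply mul_le_mul
        · rw [Nat.card_Ico]; exact_mod_cast Nat.le_of_lt (by omega)
        · apply Finset.sum_le_sum_of_subset_of_nonneg
          · intro k hk
            rw [Finset.mem_Ico] at hk; rw [Finset.mem_range]; omega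
          · intros; positivity
        · positivity
        · positivity

lemma path_bound (x y z w : ℝ) :
    (x - w) ^ 2 ≤ 3 * ((x - y) ^ 2 + (y - z) ^ 2 + (z - w) ^ 2) := by
  nlinarith [sq_nonneg (x - 2*y + z), sq_nonneg (y - 2*z + w), sq_nonneg (x - y - z + w)]

lemma counting (L : ℕ) (g : ℕ → ℕ → ℕ → ℝ) :
    ∑ a ∈ range L, ∑ b ∈ range L, ∑ c ∈ range L, ∑ a' ∈ range L, ∑ b' ∈ range L,
        ∑ c' ∈ range L, (g a b c - g a' b' c') ^ 2
    ≤ 3 * (L : ℝ) ^ 5 *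
      ((∑ b ∈ range L, ∑ c ∈ range L, ∑ k ∈ range (L - 1), (g (k+1) b c - g k b c) ^ 2)
       + (∑ c ∈ range L, ∑ a ∈ range L, ∑ k ∈ range (L - 1), (g a (k+1) c - g a k c) ^ 2)
       + (∑ a ∈ range L, ∑ b ∈ range L, ∑ k ∈ range (L - 1), (g a b (k+1) - g a b k) ^ 2)) := by
  calc ∑ a ∈ range L, ∑ b ∈ range L, ∑ c ∈ range L, ∑ a' ∈ range L, ∑ b' ∈ range L,
        ∑ c' ∈ range L, (g a b c - g a' b' c') ^ 2
      ≤ ∑ a ∈ range L, ∑ b ∈ range L, ∑ c ∈ range L, ∑ a' ∈ range L, ∑ b' ∈ range L,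
        ∑ c' ∈ range L,
          (3 * (L : ℝ) * (∑ k ∈ range (L - 1), (g (k+1) b c - g k b c) ^ 2)
           + 3 * (L : ℝ) * (∑ k ∈ range (L - 1), (g a' (k+1) c - g a' k c) ^ 2)
           + 3 * (L : ℝ) * (∑ k ∈ range (L - 1), (g a' b' (k+1) - g a' b' k) ^ 2)) := by
        refine Finset.sum_le_sum fun a ha => Finset.sum_le_sum fun b hb =>
          Finset.sum_le_sum fun c hc => Finset.sum_le_sum fun a' ha' =>
          Finset.sum_le_sum fun b' hb' => Finset.sum_le_sum fun c' hc' => ?_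
        rw [Finset.mem_range] at ha hb hc ha' hb' hc'
        have p1 := line_bound L (fun k => g k b c) ha ha'
        have p2 := line_bound L (fun k => g a' k c) hb hb'
        have p3 := line_bound L (fun k => g a' b' k) hc hc'
        have p0 := path_bound (g a b c) (g a' b c) (g a' b' c) (g a' b' c')
        linarith
    _ = 3 * (L : ℝ) ^ 5 *
      ((∑ b ∈ range L, ∑ c ∈ range L, ∑ k ∈ range (L - 1), (g (k+1) b c - g k b c) ^ 2)
       + (∑ c ∈ range L, ∑ a ∈ range L, ∑ k ∈ range (L - 1), (g a (k+1) c - g a k c) ^ 2)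
       + (∑ a ∈ range L, ∑ b ∈ range L, ∑ k ∈ range (L - 1), (g a b (k+1) - g a b k) ^ 2)) := by
        simp only [Finset.sum_add_distrib, Finset.sum_const, Finset.card_range, nsmul_eq_mul,
          ← Finset.mul_sum]
        ring

lemma core (L : ℕ) (g : ℕ → ℕ → ℕ → ℝ) :
    2 * (L : ℝ) ^ 3 * (∑ a ∈ range L, ∑ b ∈ range L, ∑ c ∈ range L, (g a b c) ^ 2)
      - 2 * (∑ a ∈ range L, ∑ b ∈ range L, ∑ c ∈ range L, g a b c) ^ 2
    ≤ 3 * (L : ℝ) ^ 5 *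
      ((∑ b ∈ range L, ∑ c ∈ range L, ∑ k ∈ range (L - 1), (g (k+1) b c - g k b c) ^ 2)
       + (∑ c ∈ range L, ∑ a ∈ range L, ∑ k ∈ range (L - 1), (g a (k+1) c - g a k c) ^ 2)
       + (∑ a ∈ range L, ∑ b ∈ range L, ∑ k ∈ range (L - 1), (g a b (k+1) - g a b k) ^ 2)) := by
  set A : Finset (ℕ × ℕ × ℕ) := range L ×ˢ (range L ×ˢ range L) with hA
  have expand : ∀ H : ℕ × ℕ × ℕ → ℝ,
      ∑ p ∈ A, H p = ∑ a ∈ range L, ∑ b ∈ range L, ∑ c ∈ range L, H (a, b, c) := by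
    intro H
    rw [hA, Finset.sum_product]
    exact Finset.sum_congr rfl fun a _ => Finset.sum_product _ _ _
  have hcard : (A.card : ℝ) = (L : ℝ) ^ 3 := by
    rw [hA]; simp [Finset.card_product]; ring
  calc 2 * (L : ℝ) ^ 3 * (∑ a ∈ range L, ∑ b ∈ range L, ∑ c ∈ range L, (g a b c) ^ 2)
      - 2 * (∑ a ∈ range L, ∑ b ∈ range L, ∑ c ∈ range L, g a b c) ^ 2
      = 2 * A.card * (∑ p ∈ A, (g p.1 p.2.1 p.2.2) ^ 2) - 2 * (∑ p ∈ A, g p.1 p.2.1 p.2.2) ^ 2 := by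
        rw [hcard, expand (fun p => (g p.1 p.2.1 p.2.2) ^ 2), expand (fun p => g p.1 p.2.1 p.2.2)]
    _ = ∑ s ∈ A, ∑ t ∈ A, (g s.1 s.2.1 s.2.2 - g t.1 t.2.1 t.2.2) ^ 2 :=
        (pair_sum_identity A _).symm
    _ = ∑ a ∈ range L, ∑ b ∈ range L, ∑ c ∈ range L, ∑ a' ∈ range L, ∑ b' ∈ range L,
          ∑ c' ∈ range L, (g a b c - g a' b' c') ^ 2 := by
        rw [expand (fun s => ∑ t ∈ A, (g s.1 s.2.1 s.2.2 - g t.1 t.2.1 t.2.2) ^ 2)]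
        exact Finset.sum_congr rfl fun a _ => Finset.sum_congr rfl fun b _ =>
          Finset.sum_congr rfl fun c _ =>
            expand (fun t => (g a b c - g t.1 t.2.1 t.2.2) ^ 2)
    _ ≤ _ := counting L g


lemma mem_cubeBox {L : ℕ} {x : Fin 3 → ℤ} :
    x ∈ cubeBox L ↔ ∀ i, 0 ≤ x i ∧ x i < L := by
  constructor
  · intro hx
    simp only [cubeBox, mem_image, mem_univ, true_and] at hx
    obtain ⟨t, rfl⟩ := hx
    intro i
    refine ⟨Int.ofNat_nonneg _, ?_⟩
    show ((t i : ℕ) : ℤ) < L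
    exact_mod_cast (t i).isLt
  · intro h
    simp only [cubeBox, mem_image, mem_univ, true_and]
    refine ⟨fun i => ⟨(x i).toNat, ?_⟩, funext fun i => ?_⟩
    · have := h i; omega
    · simp [Int.toNat_of_nonneg (h i).1]

lemma eta3 (x : Fin 3 → ℤ) : x = ![x 0, x 1, x 2] := by
  funext i; fin_cases i <;> simp

lemma vec_mem_cubeBox {L a b c : ℕ} (ha : a < L) (hb : b < L) (hc : c < L) :
    ![(a : ℤ), (b : ℤ), (c : ℤ)] ∈ cubeBox L := by
  rw [mem_cubeBox]
  intro i; fin_cases i <;> simp <;> omega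

lemma sum_cubeBox (L : ℕ) (F : (Fin 3 → ℤ) → ℝ) :
    ∑ x ∈ cubeBox L, F x
      = ∑ a ∈ range L, ∑ b ∈ range L, ∑ c ∈ range L, F ![(a : ℤ), (b : ℤ), (c : ℤ)] := by
  rw [show (∑ a ∈ range L, ∑ b ∈ range L, ∑ c ∈ range L, F ![(a : ℤ), (b : ℤ), (c : ℤ)])
      = ∑ p ∈ range L ×ˢ (range L ×ˢ range L), F ![(p.1 : ℤ), (p.2.1 : ℤ), (p.2.2 : ℤ)] by
    rw [Finset.sum_product]
    exact Finset.sum_congr rfl fun a _ =>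
      (Finset.sum_product (range L) (range L) (fun p => F ![(a : ℤ), (p.1 : ℤ), (p.2 : ℤ)])).symm]
  refine Finset.sum_nbij' (fun x => ((x 0).toNat, (x 1).toNat, (x 2).toNat))
    (fun p => ![(p.1 : ℤ), (p.2.1 : ℤ), (p.2.2 : ℤ)]) ?_ ?_ ?_ ?_ ?_
  · intro x hx
    rw [mem_cubeBox] at hx
    simp only [mem_product, mem_range]
    have h0 := hx 0; have h1 := hx 1; have h2 := hx 2
    omega
  · intro p hp
    simp only [mem_product, mem_range] at hp
    exact vec_mem_cubeBox hp.1 hp.2.1 hp.2.2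
  · intro x hx
    rw [mem_cubeBox] at hx
    conv_rhs => rw [eta3 x]
    simp [Int.toNat_of_nonneg (hx 0).1, Int.toNat_of_nonneg (hx 1).1,
      Int.toNat_of_nonneg (hx 2).1]
  · intro p hp
    simp
  · intro x hx
    rw [mem_cubeBox] at hx
    congr 1
    conv_lhs => rw [eta3 x]
    simp [Int.toNat_of_nonneg (hx 0).1, Int.toNat_of_nonneg (hx 1).1,
      Int.toNat_of_nonneg (hx 2).1]

lemma add_unit0 (x : Fin 3 → ℤ) : x + unitVec 0 = ![x 0 + 1, x 1, x 2] := by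
  funext i; fin_cases i <;> simp [unitVec]

lemma edge0 (L : ℕ) (f : (Fin 3 → ℤ) → ℝ) :
    ∑ x ∈ (cubeBox L).filter (fun x => x + unitVec 0 ∈ cubeBox L),
        (f (x + unitVec 0) - f x) ^ 2
    = ∑ b ∈ range L, ∑ c ∈ range L, ∑ k ∈ range (L - 1),
        (f ![((k + 1 : ℕ) : ℤ), (b : ℤ), (c : ℤ)] - f ![(k : ℤ), (b : ℤ), (c : ℤ)]) ^ 2 := by
  rw [show (∑ b ∈ range L, ∑ c ∈ range L, ∑ k ∈ range (L - 1),
        (f ![((k + 1 : ℕ) : ℤ), (b : ℤ), (c : ℤ)] - f ![(k : ℤ), (b : ℤ), (c : ℤ)]) ^ 2)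
      = ∑ p ∈ range L ×ˢ (range L ×ˢ range (L - 1)),
        (f ![((p.2.2 + 1 : ℕ) : ℤ), (p.1 : ℤ), (p.2.1 : ℤ)]
          - f ![(p.2.2 : ℤ), (p.1 : ℤ), (p.2.1 : ℤ)]) ^ 2 by
    rw [Finset.sum_product]
    exact Finset.sum_congr rfl fun b _ =>
      (Finset.sum_product (range L) (range (L - 1)) (fun p =>
        (f ![((p.2 + 1 : ℕ) : ℤ), (b : ℤ), (p.1 : ℤ)]
          - f ![(p.2 : ℤ), (b : ℤ), (p.1 : ℤ)]) ^ 2)).symm]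
  refine Finset.sum_nbij' (fun x => ((x 1).toNat, (x 2).toNat, (x 0).toNat))
    (fun p => ![(p.2.2 : ℤ), (p.1 : ℤ), (p.2.1 : ℤ)]) ?_ ?_ ?_ ?_ ?_
  · intro x hx
    rw [Finset.mem_filter, mem_cubeBox, mem_cubeBox] at hx
    obtain ⟨h1, h2⟩ := hx
    have e0 := h1 0; have e1 := h1 1; have e2 := h1 2
    have e3 := h2 0
    rw [add_unit0] at e3
    simp only [Matrix.cons_val_zero] at e3
    simp only [mem_product, mem_range]
    omega
  · intro p hp
    simp only [mem_product, mem_range] at hp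
    obtain ⟨hb, hc, hk⟩ := hp
    rw [Finset.mem_filter]
    refine ⟨vec_mem_cubeBox (by omega) hb hc, ?_⟩
    rw [mem_cubeBox]
    intro i; fin_cases i <;> simp [unitVec] <;> omega
  · intro x hx
    rw [Finset.mem_filter, mem_cubeBox] at hx
    obtain ⟨h1, _⟩ := hx
    conv_rhs => rw [eta3 x]
    simp [Int.toNat_of_nonneg (h1 0).1, Int.toNat_of_nonneg (h1 1).1,
      Int.toNat_of_nonneg (h1 2).1]
  · intro p hp
    simp
  · intro x hx
    rw [Finset.mem_filter, mem_cubeBox] at hx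
    obtain ⟨h1, _⟩ := hx
    have hx0 : (((x 0).toNat : ℕ) : ℤ) = x 0 := Int.toNat_of_nonneg (h1 0).1
    have hx1 : (((x 1).toNat : ℕ) : ℤ) = x 1 := Int.toNat_of_nonneg (h1 1).1
    have hx2 : (((x 2).toNat : ℕ) : ℤ) = x 2 := Int.toNat_of_nonneg (h1 2).1
    have v1 : ![(((x 0).toNat + 1 : ℕ) : ℤ), (((x 1).toNat : ℕ) : ℤ), (((x 2).toNat : ℕ) : ℤ)]
        = x + unitVec 0 := by
      rw [add_unit0]; push_cast [hx0, hx1, hx2]; rfl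
    have v2 : ![(((x 0).toNat : ℕ) : ℤ), (((x 1).toNat : ℕ) : ℤ), (((x 2).toNat : ℕ) : ℤ)]
        = x := by
      rw [hx0, hx1, hx2]; exact (eta3 x).symm
    show _ = (f ![(((x 0).toNat + 1 : ℕ) : ℤ), _, _] - f ![(((x 0).toNat : ℕ) : ℤ), _, _]) ^ 2
    rw [v1, v2]

lemma add_unit1 (x : Fin 3 → ℤ) : x + unitVec 1 = ![x 0, x 1 + 1, x 2] := by
  funext i; fin_cases i <;> simp [unitVec]

lemma add_unit2 (x : Fin 3 → ℤ) : x + unitVec 2 = ![x 0, x 1, x 2 + 1] := by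
  funext i; fin_cases i <;> simp [unitVec]

lemma edge1 (L : ℕ) (f : (Fin 3 → ℤ) → ℝ) :
    ∑ x ∈ (cubeBox L).filter (fun x => x + unitVec 1 ∈ cubeBox L),
        (f (x + unitVec 1) - f x) ^ 2
    = ∑ c ∈ range L, ∑ a ∈ range L, ∑ k ∈ range (L - 1),
        (f ![(a : ℤ), ((k + 1 : ℕ) : ℤ), (c : ℤ)] - f ![(a : ℤ), (k : ℤ), (c : ℤ)]) ^ 2 := by
  rw [show (∑ c ∈ range L, ∑ a ∈ range L, ∑ k ∈ range (L - 1),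
        (f ![(a : ℤ), ((k + 1 : ℕ) : ℤ), (c : ℤ)] - f ![(a : ℤ), (k : ℤ), (c : ℤ)]) ^ 2)
      = ∑ p ∈ range L ×ˢ (range L ×ˢ range (L - 1)),
        (f ![(p.2.1 : ℤ), ((p.2.2 + 1 : ℕ) : ℤ), (p.1 : ℤ)]
          - f ![(p.2.1 : ℤ), (p.2.2 : ℤ), (p.1 : ℤ)]) ^ 2 by
    rw [Finset.sum_product]
    exact Finset.sum_congr rfl fun c _ =>
      (Finset.sum_product (range L) (range (L - 1)) (fun p =>
        (f ![(p.1 : ℤ), ((p.2 + 1 : ℕ) : ℤ), (c : ℤ)]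
          - f ![(p.1 : ℤ), (p.2 : ℤ), (c : ℤ)]) ^ 2)).symm]
  refine Finset.sum_nbij' (fun x => ((x 2).toNat, (x 0).toNat, (x 1).toNat))
    (fun p => ![(p.2.1 : ℤ), (p.2.2 : ℤ), (p.1 : ℤ)]) ?_ ?_ ?_ ?_ ?_
  · intro x hx
    rw [Finset.mem_filter, mem_cubeBox, mem_cubeBox] at hx
    obtain ⟨h1, h2⟩ := hx
    have e0 := h1 0; have e1 := h1 1; have e2 := h1 2
    have e3 := h2 1
    rw [add_unit1] at e3
    simp only [Matrix.cons_val_one, Matrix.head_cons, Matrix.cons_val_zero] at e3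
    simp only [mem_product, mem_range]
    omega
  · intro p hp
    simp only [mem_product, mem_range] at hp
    obtain ⟨hc, ha, hk⟩ := hp
    rw [Finset.mem_filter]
    refine ⟨vec_mem_cubeBox ha (by omega) hc, ?_⟩
    rw [mem_cubeBox]
    intro i; fin_cases i <;> simp [unitVec] <;> omega
  · intro x hx
    rw [Finset.mem_filter, mem_cubeBox] at hx
    obtain ⟨h1, _⟩ := hx
    conv_rhs => rw [eta3 x]
    simp [Int.toNat_of_nonneg (h1 0).1, Int.toNat_of_nonneg (h1 1).1,
      Int.toNat_of_nonneg (h1 2).1]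
  · intro p hp
    simp
  · intro x hx
    rw [Finset.mem_filter, mem_cubeBox] at hx
    obtain ⟨h1, _⟩ := hx
    have hx0 : (((x 0).toNat : ℕ) : ℤ) = x 0 := Int.toNat_of_nonneg (h1 0).1
    have hx1 : (((x 1).toNat : ℕ) : ℤ) = x 1 := Int.toNat_of_nonneg (h1 1).1
    have hx2 : (((x 2).toNat : ℕ) : ℤ) = x 2 := Int.toNat_of_nonneg (h1 2).1
    have v1 : ![(((x 0).toNat : ℕ) : ℤ), (((x 1).toNat + 1 : ℕ) : ℤ), (((x 2).toNat : ℕ) : ℤ)]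
        = x + unitVec 1 := by
      rw [add_unit1]; push_cast [hx0, hx1, hx2]; rfl
    have v2 : ![(((x 0).toNat : ℕ) : ℤ), (((x 1).toNat : ℕ) : ℤ), (((x 2).toNat : ℕ) : ℤ)]
        = x := by
      rw [hx0, hx1, hx2]; exact (eta3 x).symm
    show _ = (f ![(((x 0).toNat : ℕ) : ℤ), (((x 1).toNat + 1 : ℕ) : ℤ), _]
        - f ![(((x 0).toNat : ℕ) : ℤ), (((x 1).toNat : ℕ) : ℤ), _]) ^ 2
    rw [v1, v2]

lemma edge2 (L : ℕ) (f : (Fin 3 → ℤ) → ℝ) :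
    ∑ x ∈ (cubeBox L).filter (fun x => x + unitVec 2 ∈ cubeBox L),
        (f (x + unitVec 2) - f x) ^ 2
    = ∑ a ∈ range L, ∑ b ∈ range L, ∑ k ∈ range (L - 1),
        (f ![(a : ℤ), (b : ℤ), ((k + 1 : ℕ) : ℤ)] - f ![(a : ℤ), (b : ℤ), (k : ℤ)]) ^ 2 := by
  rw [show (∑ a ∈ range L, ∑ b ∈ range L, ∑ k ∈ range (L - 1),
        (f ![(a : ℤ), (b : ℤ), ((k + 1 : ℕ) : ℤ)] - f ![(a : ℤ), (b : ℤ), (k : ℤ)]) ^ 2)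
      = ∑ p ∈ range L ×ˢ (range L ×ˢ range (L - 1)),
        (f ![(p.1 : ℤ), (p.2.1 : ℤ), ((p.2.2 + 1 : ℕ) : ℤ)]
          - f ![(p.1 : ℤ), (p.2.1 : ℤ), (p.2.2 : ℤ)]) ^ 2 by
    rw [Finset.sum_product]
    exact Finset.sum_congr rfl fun a _ =>
      (Finset.sum_product (range L) (range (L - 1)) (fun p =>
        (f ![(a : ℤ), (p.1 : ℤ), ((p.2 + 1 : ℕ) : ℤ)]
          - f ![(a : ℤ), (p.1 : ℤ), (p.2 : ℤ)]) ^ 2)).symm]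
  refine Finset.sum_nbij' (fun x => ((x 0).toNat, (x 1).toNat, (x 2).toNat))
    (fun p => ![(p.1 : ℤ), (p.2.1 : ℤ), (p.2.2 : ℤ)]) ?_ ?_ ?_ ?_ ?_
  · intro x hx
    rw [Finset.mem_filter, mem_cubeBox, mem_cubeBox] at hx
    obtain ⟨h1, h2⟩ := hx
    have e0 := h1 0; have e1 := h1 1; have e2 := h1 2
    have e3 := h2 2
    rw [add_unit2] at e3
    simp only [Matrix.cons_val_two, Matrix.tail_cons, Matrix.head_cons] at e3
    simp only [mem_product, mem_range]
    omega
  · intro p hp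
    simp only [mem_product, mem_range] at hp
    obtain ⟨ha, hb, hk⟩ := hp
    rw [Finset.mem_filter]
    refine ⟨vec_mem_cubeBox ha hb (by omega), ?_⟩
    rw [mem_cubeBox]
    intro i; fin_cases i <;> simp [unitVec] <;> omega
  · intro x hx
    rw [Finset.mem_filter, mem_cubeBox] at hx
    obtain ⟨h1, _⟩ := hx
    conv_rhs => rw [eta3 x]
    simp [Int.toNat_of_nonneg (h1 0).1, Int.toNat_of_nonneg (h1 1).1,
      Int.toNat_of_nonneg (h1 2).1]
  · intro p hp
    simp
  · intro x hx
    rw [Finset.mem_filter, mem_cubeBox] at hx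
    obtain ⟨h1, _⟩ := hx
    have hx0 : (((x 0).toNat : ℕ) : ℤ) = x 0 := Int.toNat_of_nonneg (h1 0).1
    have hx1 : (((x 1).toNat : ℕ) : ℤ) = x 1 := Int.toNat_of_nonneg (h1 1).1
    have hx2 : (((x 2).toNat : ℕ) : ℤ) = x 2 := Int.toNat_of_nonneg (h1 2).1
    have v1 : ![(((x 0).toNat : ℕ) : ℤ), (((x 1).toNat : ℕ) : ℤ), (((x 2).toNat + 1 : ℕ) : ℤ)]
        = x + unitVec 2 := by
      rw [add_unit2]; push_cast [hx0, hx1, hx2]; rfl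
    have v2 : ![(((x 0).toNat : ℕ) : ℤ), (((x 1).toNat : ℕ) : ℤ), (((x 2).toNat : ℕ) : ℤ)]
        = x := by
      rw [hx0, hx1, hx2]; exact (eta3 x).symm
    show _ = (f ![(((x 0).toNat : ℕ) : ℤ), (((x 1).toNat : ℕ) : ℤ), (((x 2).toNat + 1 : ℕ) : ℤ)]
        - f ![(((x 0).toNat : ℕ) : ℤ), (((x 1).toNat : ℕ) : ℤ), (((x 2).toNat : ℕ) : ℤ)]) ^ 2
    rw [v1, v2]


lemma final_algebra (Lr a E Q S : ℝ) (hLr : 0 < Lr) (ha : 0 < a)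
    (hE : 0 ≤ E) (key : 2 * Lr ^ 3 * Q - 2 * S ^ 2 ≤ 3 * Lr ^ 5 * E) :
    min (2/3) a * (Lr ^ 2)⁻¹ * Q ≤ E + a * Lr * ((Lr ^ 3)⁻¹ * S) ^ 2 := by
  have hL0 : Lr ≠ 0 := ne_of_gt hLr
  have hm : 0 ≤ min (2/3) a := le_min (by norm_num) ha.le
  have hQ' : Q ≤ 3/2 * Lr ^ 2 * E + (Lr ^ 3)⁻¹ * S ^ 2 := by
    rw [← mul_le_mul_iff_right₀ (show (0:ℝ) < 2 * Lr ^ 3 by positivity)]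
    have expand : 2 * Lr ^ 3 * (3/2 * Lr ^ 2 * E + (Lr ^ 3)⁻¹ * S ^ 2)
        = 3 * Lr ^ 5 * E + 2 * S ^ 2 := by
      field_simp
    rw [expand]; linarith
  calc min (2/3) a * (Lr ^ 2)⁻¹ * Q
      ≤ min (2/3) a * (Lr ^ 2)⁻¹ * (3/2 * Lr ^ 2 * E + (Lr ^ 3)⁻¹ * S ^ 2) := by
        apply mul_le_mul_of_nonneg_left hQ' (by positivity)
    _ = (3/2 * min (2/3) a) * E + min (2/3) a * ((Lr ^ 5)⁻¹ * S ^ 2) := by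
        field_simp
    _ ≤ 1 * E + a * ((Lr ^ 5)⁻¹ * S ^ 2) := by
        apply add_le_add
        · apply mul_le_mul_of_nonneg_right _ hE
          have := min_le_left (2/3 : ℝ) a; linarith
        · exact mul_le_mul_of_nonneg_right (min_le_right _ _) (by positivity)
    _ = E + a * Lr * ((Lr ^ 3)⁻¹ * S) ^ 2 := by
        field_simp


/-- lower bound on the Neumann Dirichlet form plus mean-squared term
on an `L`-cube: `E(f) + a·L·m(f)² ≥ min(c₀,a)·L⁻²·Σ_{x∈B} f(x)²` with a universal
constant `c₀`. -/
theorem neumann_cube_lower_bound :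
    ∃ c₀ : ℝ, 0 < c₀ ∧ ∀ L : ℕ, 0 < L → ∀ a : ℝ, 0 < a → ∀ f : (Fin 3 → ℤ) → ℝ,
      min c₀ a * ((L : ℝ) ^ 2)⁻¹ * ∑ x ∈ cubeBox L, f x ^ 2 ≤
      (∑ μ : Fin 3, ∑ x ∈ (cubeBox L).filter (fun x => x + unitVec μ ∈ cubeBox L),
          (f (x + unitVec μ) - f x) ^ 2) +
        a * (L : ℝ) * (((L : ℝ) ^ 3)⁻¹ * ∑ x ∈ cubeBox L, f x) ^ 2 := by
  refine ⟨2/3, by norm_num, fun L hL a ha f => ?_⟩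
  have hLr : (0:ℝ) < (L : ℝ) := by exact_mod_cast hL
  rw [Fin.sum_univ_three, edge0 L f, edge1 L f, edge2 L f,
    sum_cubeBox L (fun x => f x ^ 2), sum_cubeBox L f]
  have hE : (0:ℝ) ≤
      (∑ b ∈ range L, ∑ c ∈ range L, ∑ k ∈ range (L - 1),
        (f ![((k + 1 : ℕ) : ℤ), (b : ℤ), (c : ℤ)] - f ![(k : ℤ), (b : ℤ), (c : ℤ)]) ^ 2)
      + (∑ c ∈ range L, ∑ a ∈ range L, ∑ k ∈ range (L - 1),
        (f ![(a : ℤ), ((k + 1 : ℕ) : ℤ), (c : ℤ)] - f ![(a : ℤ), (k : ℤ), (c : ℤ)]) ^ 2)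
      + (∑ a ∈ range L, ∑ b ∈ range L, ∑ k ∈ range (L - 1),
        (f ![(a : ℤ), (b : ℤ), ((k + 1 : ℕ) : ℤ)] - f ![(a : ℤ), (b : ℤ), (k : ℤ)]) ^ 2) := by
    positivity
  have key := core L (fun p q r => f ![(p : ℤ), (q : ℤ), (r : ℤ)])
  exact final_algebra (L : ℝ) a _ _ _ hLr ha hE key
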